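/- Fix N and suppose that no two N-partitions of Γ with distinct vertex partitions have equal energy at two distinct values of λ, i.e., there is no pair of N-partitions {Γ_k}, {Γ'_k} with different vertex partitions and values λ₁ ≠ λ₂ in [0,1] with F_{λ₁}({Γ_k}) = F_{λ₁}({Γ'_k}) and F_{λ₂}({Γ_k}) = F_{λ₂}({Γ'_k}). Then there is a finite set T ⊂ [0,1] of transition values such that for every λ ∈ [0,1] \ T the minimizer of F_λ among N-partitions is unique (as a vertex partition). -/
import Mathlib


open Finset

namespace Districting

variable {V : Type*} [Fintype V] [DecidableEq V]

/-- An `N`-partition of a graph `G`: a family of `N` pairwise disjoint sets of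
vertexes covering all of `V`, each inducing a connected subgraph of `G`. -/
structure Partition (G : SimpleGraph V) (N : ℕ) where
  part : Fin N → Finset V
  disj : ∀ k l, k ≠ l → Disjoint (part k) (part l)
  covers : ∀ v : V, ∃ k, v ∈ part k
  connected : ∀ k, (G.induce (part k : Set V)).Connected

/-- The mass of a set of vertexes w.r.t. the vertex weight `f`. -/
def mass (f : V → ℝ) (s : Finset V) : ℝ := ∑ v ∈ s, f v

/-- The total mass of the graph w.r.t. the vertex weight `f`. -/
def totalMass (f : V → ℝ) : ℝ := ∑ v : V, f v

open Classical in
/-- The cut (perimeter) energy of a partition: the sum of the weights of edges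
whose endpoints lie in different parts. -/
noncomputable def cutEnergy (G : SimpleGraph V) (g : Sym2 V → ℝ) {N : ℕ}
    (P : Partition G N) : ℝ :=
  ∑ e : Sym2 V,
    if e ∈ G.edgeSet ∧ ∀ k, ¬ (∀ v ∈ e, v ∈ P.part k) then g e else 0

/-- The deviation energy of a partition: the standard deviation of the masses
from the mean mass. -/
noncomputable def deviation {G : SimpleGraph V} (f : V → ℝ) {N : ℕ}
    (P : Partition G N) : ℝ :=
  Real.sqrt (∑ k : Fin N, (mass f (P.part k) - totalMass f / (N : ℝ)) ^ 2)

/-- The energy functional `F_λ`. -/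
noncomputable def energy (G : SimpleGraph V) (f : V → ℝ) (g : Sym2 V → ℝ)
    (lam : ℝ) {N : ℕ} (P : Partition G N) : ℝ :=
  lam * cutEnergy G g P + (1 - lam) * deviation f P

end Districting

namespace Districting

/-- if no two `N`-partitions with distinct vertex partitions have
equal energy at two distinct values of `λ` in `[0,1]`, then outside a finite set
of transition values the minimizer of `F_λ` is unique as a vertex partition. -/
theorem unique_minimizer_off_finite_set
    {V : Type*} [Fintype V] [DecidableEq V]
    (G : SimpleGraph V) (hG : G.Connected)
    (f : V → ℝ) (hf : ∀ v, 0 < f v)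
    (g : Sym2 V → ℝ) (hg : ∀ e ∈ G.edgeSet, 0 < g e)
    (N : ℕ) (hne : Nonempty (Partition G N))
    (h : ¬ ∃ (P Q : Partition G N) (lam₁ lam₂ : ℝ),
        Set.range P.part ≠ Set.range Q.part ∧
        lam₁ ∈ Set.Icc (0 : ℝ) 1 ∧ lam₂ ∈ Set.Icc (0 : ℝ) 1 ∧ lam₁ ≠ lam₂ ∧
        energy G f g lam₁ P = energy G f g lam₁ Q ∧
        energy G f g lam₂ P = energy G f g lam₂ Q) :
    ∃ T : Finset ℝ, ↑T ⊆ Set.Icc (0 : ℝ) 1 ∧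
      ∀ lam ∈ Set.Icc (0 : ℝ) 1, lam ∉ T →
        ∃ P : Partition G N,
          (∀ Q : Partition G N, energy G f g lam P ≤ energy G f g lam Q) ∧
          ∀ Q : Partition G N,
            (∀ R : Partition G N, energy G f g lam Q ≤ energy G f g lam R) →
            Set.range Q.part = Set.range P.part := by
  classical
  haveI : Finite (Partition G N) :=
    Finite.of_injective (fun P => P.part) (by
      rintro ⟨p, _, _, _⟩ ⟨q, _, _, _⟩ hpq
      simpa using hpq)
  set T' : Set ℝ := {lam | lam ∈ Set.Icc (0:ℝ) 1 ∧ ∃ P Q : Partition G N,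
      Set.range P.part ≠ Set.range Q.part ∧
      energy G f g lam P = energy G f g lam Q} with hT'
  have hfin : T'.Finite := by
    have hsub : T' ⊆ ⋃ (p : Partition G N × Partition G N),
        {lam | lam ∈ Set.Icc (0:ℝ) 1 ∧ Set.range p.1.part ≠ Set.range p.2.part ∧
          energy G f g lam p.1 = energy G f g lam p.2} := by
      rintro lam ⟨hmem, P, Q, hne', heq⟩
      exact Set.mem_iUnion.mpr ⟨(P, Q), hmem, hne', heq⟩
    refine Set.Finite.subset (Set.finite_iUnion fun p => ?_) hsub
    refine Set.Subsingleton.finite ?_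
    rintro lam₁ ⟨h1, hr, he1⟩ lam₂ ⟨h2, _, he2⟩
    by_contra hne2
    exact h ⟨p.1, p.2, lam₁, lam₂, hr, h1, h2, hne2, he1, he2⟩
  refine ⟨hfin.toFinset, ?_, ?_⟩
  · intro lam hlam
    exact (hfin.mem_toFinset.mp hlam).1
  · intro lam hlam hnotT
    obtain ⟨P, hP⟩ := Finite.exists_min (energy G f g lam (N := N))
    refine ⟨P, hP, ?_⟩
    intro Q hQ
    by_contra hne2
    have heq : energy G f g lam Q = energy G f g lam P :=
      le_antisymm (hQ P) (hP Q)
    exact hnotT (hfin.mem_toFinset.mpr ⟨hlam, Q, P, hne2, heq⟩)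

end Districting
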